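/- For the min s-t cut function f(w) = argmin over assignments y ∈ {−1,1}^n with y_s = 1, y_t = −1 of ∑_{i<j} w_{ij}(1 − y_i y_j) (assumed unique), the edge set S = {{u,v} : u ∈ {s,t}, v ∉ {s,t}} is a dominating set of sensitivity 2: for any neighboring weight vectors w, w' differing by at most 1 on a single edge, there exists a ∈ ℝ^S with ‖a‖₁ ≤ 2, depending only on f(w) and w' − w, such that f restricted to (w'|_S + a, w'|_{S^c}) equals f(w). -/

import Mathlib

open Finset

/-- Cost of an `s`-`t` cut given by a two-coloring `y` on weights indexed by unordered pairs. -/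
noncomputable def stCost (n : ℕ) (w : Sym2 (Fin n) → ℝ) (y : Fin n → Bool) : ℝ :=
  (1 / 2) * ∑ u : Fin n, ∑ v : Fin n, if y u ≠ y v then w (s(u, v)) else 0

/-- Neighboring weight vectors: they differ on at most one edge, by at most one. -/
def NeighboringW (n : ℕ) (w w' : Sym2 (Fin n) → ℝ) : Prop :=
  ∃ e₀, (∀ e, e ≠ e₀ → w' e = w e) ∧ |w' e₀ - w e₀| ≤ 1

/-- Edges between a terminal in `{s, t}` and a non-terminal. -/
def terminalEdges (n : ℕ) (s t : Fin n) : Set (Sym2 (Fin n)) :=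
  {e | ∃ v, v ≠ s ∧ v ≠ t ∧ (e = s(s, v) ∨ e = s(t, v))}

open Classical in
noncomputable def sigmaT (n : ℕ) (s t : Fin n) (y₀ : Fin n → Bool) (δ : ℝ) (x : Fin n) :
    Fin n :=
  if decide (0 ≤ δ) ≠ y₀ x then s else t

open Classical in
noncomputable def Bfun (n : ℕ) (s t : Fin n) (y₀ : Fin n → Bool) (e₀ : Sym2 (Fin n)) (δ : ℝ) :
    Sym2 (Fin n) → ℝ := fun e =>
  if e₀ ∈ terminalEdges n s t then (if e = e₀ then -δ else 0)
  else if ¬ e₀.IsDiag ∧ (∀ x ∈ e₀, x ≠ s ∧ x ≠ t) then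
    ∑ x : Fin n, if x ∈ e₀ ∧ e = s(sigmaT n s t y₀ δ x, x) then -δ else 0
  else 0

open Classical in
noncomputable def Afun (n : ℕ) (s t : Fin n) :
    (Fin n → Bool) × (Sym2 (Fin n) → ℝ) → Sym2 (Fin n) → ℝ := fun p =>
  if h : ∃ e, p.2 e ≠ 0 ∧ ∀ e', e' ≠ e → p.2 e' = 0 then
    Bfun n s t p.1 h.choose (p.2 h.choose)
  else 0

lemma sum_abs_delta (n : ℕ) (E : Sym2 (Fin n)) (c : ℝ) :
    ∑ e : Sym2 (Fin n), |if e = E then c else 0| = |c| := by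
  classical
  have : ∀ e : Sym2 (Fin n), |if e = E then c else 0| = if e = E then |c| else 0 := by
    intro e; split <;> simp
  rw [Finset.sum_congr rfl fun e _ => this e, Finset.sum_ite_eq' univ E fun _ => |c|]
  simp


lemma stCost_add (n : ℕ) (w a : Sym2 (Fin n) → ℝ) (y : Fin n → Bool) :
    stCost n (fun e => w e + a e) y = stCost n w y + stCost n a y := by
  unfold stCost
  rw [← mul_add, ← Finset.sum_add_distrib]
  congr 1
  refine Finset.sum_congr rfl fun u _ => ?_
  rw [← Finset.sum_add_distrib]
  refine Finset.sum_congr rfl fun v _ => ?_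
  split <;> simp

lemma delta_cost (n : ℕ) (u₀ v₀ : Fin n) (c : ℝ) (y : Fin n → Bool) :
    stCost n (fun e => if e = s(u₀, v₀) then c else 0) y
      = if y u₀ ≠ y v₀ then c else 0 := by
  classical
  unfold stCost
  by_cases hd : u₀ = v₀
  · subst hd
    have key : ∀ u v : Fin n,
        (if y u ≠ y v then (if s(u,v) = s(u₀,u₀) then c else 0) else 0) = 0 := by
      intro u v
      rcases eq_or_ne (y u) (y v) with h | h
      · simp [h]
      · rcases eq_or_ne (s(u,v)) (s(u₀,u₀)) with h2 | h2
        · rw [Sym2.eq_iff] at h2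
          obtain ⟨rfl, rfl⟩ : u = u₀ ∧ v = u₀ := by tauto
          simp at h
        · simp [h2]
    rw [Finset.sum_eq_zero (fun u _ => Finset.sum_eq_zero (fun v _ => key u v))]
    simp
  · have pair : ∀ (a b : Fin n) (r : ℝ),
        (∑ u : Fin n, ∑ v : Fin n, if u = a ∧ v = b then r else 0) = r := by
      intro a b r
      rw [Finset.sum_eq_single a (fun u _ hu => Finset.sum_eq_zero (fun v _ => by simp [hu]))
            (by simp),
          Finset.sum_eq_single b (fun v _ hv => by simp [hv]) (by simp)]
      simp
    have key : ∀ u v : Fin n,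
        (if y u ≠ y v then (if s(u,v) = s(u₀,v₀) then c else 0) else 0)
        = (if u = u₀ ∧ v = v₀ then (if y u₀ ≠ y v₀ then c else 0) else 0)
          + (if u = v₀ ∧ v = u₀ then (if y u₀ ≠ y v₀ then c else 0) else 0) := by
      intro u v
      by_cases h1 : u = u₀ ∧ v = v₀
      · obtain ⟨rfl, rfl⟩ := h1
        simp [hd]
      · by_cases h2 : u = v₀ ∧ v = u₀
        · obtain ⟨rfl, rfl⟩ := h2
          have hsw : s(u, v) = s(v, u) := Sym2.eq_swap
          have hd' : ¬ (u = v) := fun h => hd h.symm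
          rw [hsw]
          simp [hd']
          rcases eq_or_ne (y u) (y v) with h | h
          · simp [h]
          · simp [h, h.symm, Ne.symm h]
        · have h3 : s(u,v) ≠ s(u₀,v₀) := by
            rw [Ne, Sym2.eq_iff]; tauto
          simp [h1, h2, h3]
    calc (1/2 : ℝ) * ∑ u : Fin n, ∑ v : Fin n,
          (if y u ≠ y v then (if s(u,v) = s(u₀,v₀) then c else 0) else 0)
        = (1/2 : ℝ) * (((if y u₀ ≠ y v₀ then c else 0)) + ((if y u₀ ≠ y v₀ then c else 0))) := by
          rw [Finset.sum_congr rfl fun u _ => Finset.sum_congr rfl fun v _ => key u v]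
          have split2 : ∀ f g : Fin n → Fin n → ℝ,
              (∑ u : Fin n, ∑ v : Fin n, (f u v + g u v))
              = (∑ u : Fin n, ∑ v : Fin n, f u v) + (∑ u : Fin n, ∑ v : Fin n, g u v) := by
            intro f g
            rw [← Finset.sum_add_distrib]
            exact Finset.sum_congr rfl fun u _ => Finset.sum_add_distrib
          rw [split2, pair, pair]
      _ = if y u₀ ≠ y v₀ then c else 0 := by split <;> ring

lemma stCost_add3 (n : ℕ) (w a b c : Sym2 (Fin n) → ℝ) (y : Fin n → Bool) :
    stCost n (fun e => w e + (a e + (b e + c e))) y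
      = stCost n w y + (stCost n a y + (stCost n b y + stCost n c y)) := by
  rw [stCost_add n w (fun e => a e + (b e + c e)) y,
    stCost_add n a (fun e => b e + c e) y, stCost_add n b c y]

lemma crux (n : ℕ) (s t : Fin n) (hst : s ≠ t) (w w' : Sym2 (Fin n) → ℝ)
    (u v : Fin n)
    (hd1 : ∀ e, e ≠ s(u, v) → w' e = w e)
    (hδ : |w' (s(u, v)) - w (s(u, v))| ≤ 1)
    (y₀ : Fin n → Bool) (h0s : y₀ s = true) (h0t : y₀ t = false)
    (hmin : ∀ y : Fin n → Bool, y s = true → y t = false → stCost n w y₀ ≤ stCost n w y)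
    (huniq : ∀ y : Fin n → Bool, y s = true → y t = false →
      stCost n w y = stCost n w y₀ → y = y₀) :
    (∀ e, e ∉ terminalEdges n s t →
      Bfun n s t y₀ (s(u, v)) (w' (s(u, v)) - w (s(u, v))) e = 0) ∧
    (∑ e : Sym2 (Fin n),
      |Bfun n s t y₀ (s(u, v)) (w' (s(u, v)) - w (s(u, v))) e| ≤ 2) ∧
    (∀ y : Fin n → Bool, y s = true → y t = false →
      stCost n (fun e => w' e +
        Bfun n s t y₀ (s(u, v)) (w' (s(u, v)) - w (s(u, v))) e) y₀
      ≤ stCost n (fun e => w' e +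
        Bfun n s t y₀ (s(u, v)) (w' (s(u, v)) - w (s(u, v))) e) y) ∧
    (∀ y : Fin n → Bool, y s = true → y t = false →
      stCost n (fun e => w' e +
        Bfun n s t y₀ (s(u, v)) (w' (s(u, v)) - w (s(u, v))) e) y
      = stCost n (fun e => w' e +
        Bfun n s t y₀ (s(u, v)) (w' (s(u, v)) - w (s(u, v))) e) y₀
      → y = y₀) := by
  classical
  set δ := w' (s(u, v)) - w (s(u, v)) with hδdef
  by_cases hterm : s(u, v) ∈ terminalEdges n s t
  · -- the changed edge is itself a terminal edge; cancel it exactly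
    have hB : ∀ e, Bfun n s t y₀ (s(u, v)) δ e
        = if e = s(u, v) then -δ else 0 := by
      intro e; unfold Bfun; rw [if_pos hterm]
    have hg : (fun e => w' e + Bfun n s t y₀ (s(u, v)) δ e) = w := by
      funext e
      rw [hB e]
      rcases eq_or_ne e (s(u, v)) with rfl | h
      · rw [if_pos rfl, hδdef]; ring
      · rw [if_neg h, hd1 e h]; ring
    rw [hg]
    refine ⟨?_, ?_, hmin, huniq⟩
    · intro e he
      rw [hB e, if_neg]
      rintro rfl
      exact he hterm
    · calc ∑ e : Sym2 (Fin n), |Bfun n s t y₀ (s(u, v)) δ e|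
          = ∑ e : Sym2 (Fin n), |if e = s(u, v) then -δ else 0| :=
            Finset.sum_congr rfl fun e _ => by rw [hB e]
        _ = |-δ| := sum_abs_delta n _ _
        _ ≤ 2 := by rw [abs_neg]; linarith
  · by_cases hgood : ¬ (s(u, v)).IsDiag ∧ (∀ x ∈ s(u, v), x ≠ s ∧ x ≠ t)
    · -- main case: edge between two non-terminals
      have huv : u ≠ v := fun h => hgood.1 (Sym2.mk_isDiag_iff.mpr h)
      have hus : u ≠ s := (hgood.2 u (Sym2.mem_mk_left u v)).1
      have hut : u ≠ t := (hgood.2 u (Sym2.mem_mk_left u v)).2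
      have hvs : v ≠ s := (hgood.2 v (Sym2.mem_mk_right u v)).1
      have hvt : v ≠ t := (hgood.2 v (Sym2.mem_mk_right u v)).2
      have hBapp : ∀ e, Bfun n s t y₀ (s(u, v)) δ e
          = (if e = s(sigmaT n s t y₀ δ u, u) then -δ else 0)
            + (if e = s(sigmaT n s t y₀ δ v, v) then -δ else 0) := by
        intro e
        unfold Bfun
        rw [if_neg hterm, if_pos hgood]
        have hpt : ∀ x : Fin n,
            (if x ∈ s(u, v) ∧ e = s(sigmaT n s t y₀ δ x, x) then -δ else 0)
            = (if x = u then (if e = s(sigmaT n s t y₀ δ x, x) then -δ else 0) else 0)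
              + (if x = v then (if e = s(sigmaT n s t y₀ δ x, x) then -δ else 0) else 0) := by
          intro x
          rcases eq_or_ne x u with rfl | hxu
          · simp [Sym2.mem_iff, huv]
          · rcases eq_or_ne x v with rfl | hxv
            · simp [Sym2.mem_iff, hxu]
            · simp [Sym2.mem_iff, hxu, hxv]
        rw [Finset.sum_congr rfl fun x _ => hpt x]
        rw [Finset.sum_add_distrib, Finset.sum_ite_eq' univ u, Finset.sum_ite_eq' univ v]
        simp
      have hg : ∀ y : Fin n → Bool,
          stCost n (fun e => w' e + Bfun n s t y₀ (s(u, v)) δ e) y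
          = stCost n w y + ((if y u ≠ y v then δ else 0)
            + ((if y (sigmaT n s t y₀ δ u) ≠ y u then -δ else 0)
              + (if y (sigmaT n s t y₀ δ v) ≠ y v then -δ else 0))) := by
        intro y
        have hdec : (fun e => w' e + Bfun n s t y₀ (s(u, v)) δ e)
            = fun e => w e + ((if e = s(u, v) then δ else 0)
              + ((if e = s(sigmaT n s t y₀ δ u, u) then -δ else 0)
                + (if e = s(sigmaT n s t y₀ δ v, v) then -δ else 0))) := by
          funext e
          rw [hBapp e]
          rcases eq_or_ne e (s(u, v)) with rfl | h
          · rw [if_pos rfl, hδdef]; ring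
          · rw [if_neg h, hd1 e h]; ring
        rw [hdec, stCost_add3, delta_cost, delta_cost, delta_cost]
      have hkey : ∀ y : Fin n → Bool, y s = true → y t = false →
          ((if y₀ u ≠ y₀ v then δ else 0)
            + ((if y₀ (sigmaT n s t y₀ δ u) ≠ y₀ u then -δ else 0)
              + (if y₀ (sigmaT n s t y₀ δ v) ≠ y₀ v then -δ else 0)))
          ≤ ((if y u ≠ y v then δ else 0)
            + ((if y (sigmaT n s t y₀ δ u) ≠ y u then -δ else 0)
              + (if y (sigmaT n s t y₀ δ v) ≠ y v then -δ else 0))) := by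
        intro y hys hyt
        by_cases hsgn : 0 ≤ δ
        · cases h1 : y₀ u <;> cases h2 : y₀ v <;> cases h3 : y u <;> cases h4 : y v <;>
            simp [sigmaT, hsgn, h1, h2, h3, h4, hys, hyt, h0s, h0t] <;> linarith
        · have hneg : δ ≤ 0 := le_of_not_ge hsgn
          cases h1 : y₀ u <;> cases h2 : y₀ v <;> cases h3 : y u <;> cases h4 : y v <;>
            simp [sigmaT, hsgn, h1, h2, h3, h4, hys, hyt, h0s, h0t] <;> linarith
      have hE1 : s(sigmaT n s t y₀ δ u, u) ∈ terminalEdges n s t := by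
        refine ⟨u, hus, hut, ?_⟩
        unfold sigmaT
        split
        · exact Or.inl rfl
        · exact Or.inr rfl
      have hE2 : s(sigmaT n s t y₀ δ v, v) ∈ terminalEdges n s t := by
        refine ⟨v, hvs, hvt, ?_⟩
        unfold sigmaT
        split
        · exact Or.inl rfl
        · exact Or.inr rfl
      refine ⟨?_, ?_, ?_, ?_⟩
      · intro e he
        rw [hBapp e, if_neg (by rintro rfl; exact he hE1),
          if_neg (by rintro rfl; exact he hE2), add_zero]
      · calc ∑ e : Sym2 (Fin n), |Bfun n s t y₀ (s(u, v)) δ e|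
            = ∑ e : Sym2 (Fin n),
              |(if e = s(sigmaT n s t y₀ δ u, u) then -δ else 0)
                + (if e = s(sigmaT n s t y₀ δ v, v) then -δ else 0)| :=
              Finset.sum_congr rfl fun e _ => by rw [hBapp e]
          _ ≤ ∑ e : Sym2 (Fin n),
              (|if e = s(sigmaT n s t y₀ δ u, u) then -δ else 0|
                + |if e = s(sigmaT n s t y₀ δ v, v) then -δ else 0|) :=
              Finset.sum_le_sum fun e _ => abs_add_le _ _
          _ = |-δ| + |-δ| := by
              rw [Finset.sum_add_distrib, sum_abs_delta, sum_abs_delta]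
          _ ≤ 2 := by rw [abs_neg]; linarith
      · intro y hys hyt
        rw [hg y, hg y₀]
        have h1 := hmin y hys hyt
        have h2 := hkey y hys hyt
        linarith
      · intro y hys hyt heq
        rw [hg y, hg y₀] at heq
        have h1 := hmin y hys hyt
        have h2 := hkey y hys hyt
        exact huniq y hys hyt (by linarith)
    · -- degenerate case: loop edge or the edge {s,t}
      have hB : ∀ e, Bfun n s t y₀ (s(u, v)) δ e = 0 := by
        intro e; unfold Bfun; rw [if_neg hterm, if_neg hgood]
      have hcost : ∀ y : Fin n → Bool, stCost n (fun e => w' e + Bfun n s t y₀ (s(u, v)) δ e) y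
          = stCost n w y + (if y u ≠ y v then δ else 0) := by
        intro y
        have hdec : (fun e => w' e + Bfun n s t y₀ (s(u, v)) δ e)
            = fun e => w e + (if e = s(u, v) then δ else 0) := by
          funext e
          rw [hB e, add_zero]
          rcases eq_or_ne e (s(u, v)) with rfl | h
          · rw [if_pos rfl, hδdef]; ring
          · rw [if_neg h, hd1 e h, add_zero]
        rw [hdec, stCost_add, delta_cost]
      by_cases huv : u = v
      · subst huv
        refine ⟨fun e _ => hB e, by simp [hB], ?_, ?_⟩
        · intro y hys hyt
          rw [hcost y, hcost y₀]
          simpa using hmin y hys hyt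
        · intro y hys hyt heq
          rw [hcost y, hcost y₀] at heq
          simp at heq
          exact huniq y hys hyt heq
      · have hcut : ∀ y : Fin n → Bool, y s = true → y t = false → (y u ≠ y v) := by
            have hstuv : (u = s ∧ v = t) ∨ (u = t ∧ v = s) := by
              rw [not_and_or, not_not] at hgood
              rcases hgood with hdiag | hx
              · exact absurd (Sym2.mk_isDiag_iff.mp hdiag) huv
              · push_neg at hx
                obtain ⟨x, hxmem, hxst⟩ := hx
                have hxst' : x = s ∨ x = t := by
                  by_cases hxs : x = s
                  · exact Or.inl hxs
                  · exact Or.inr (hxst hxs)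
                rw [Sym2.mem_iff] at hxmem
                rcases hxmem with rfl | rfl
                · rcases hxst' with rfl | rfl
                  · by_cases hvt : v = t
                    · exact Or.inl ⟨rfl, hvt⟩
                    · exact absurd ⟨v, fun hvs => huv hvs.symm, hvt, Or.inl rfl⟩ hterm
                  · by_cases hvs : v = s
                    · exact Or.inr ⟨rfl, hvs⟩
                    · exact absurd ⟨v, hvs, fun hvt => huv hvt.symm, Or.inr rfl⟩ hterm
                · rcases hxst' with rfl | rfl
                  · by_cases hut : u = t
                    · exact Or.inr ⟨hut, rfl⟩
                    · exact absurd ⟨u, fun hus => huv hus, hut,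
                        Or.inl (Sym2.eq_swap)⟩ hterm
                  · by_cases hus : u = s
                    · exact Or.inl ⟨hus, rfl⟩
                    · exact absurd ⟨u, hus, fun hut => huv hut, Or.inr (Sym2.eq_swap)⟩ hterm
            intro y hys hyt
            rcases hstuv with ⟨rfl, rfl⟩ | ⟨rfl, rfl⟩ <;> simp [hys, hyt]
        refine ⟨fun e _ => hB e, by simp [hB], ?_, ?_⟩
        · intro y hys hyt
          rw [hcost y, hcost y₀, if_pos (hcut y hys hyt), if_pos (hcut y₀ h0s h0t)]
          have := hmin y hys hyt
          linarith
        · intro y hys hyt heq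
          rw [hcost y, hcost y₀, if_pos (hcut y hys hyt), if_pos (hcut y₀ h0s h0t)] at heq
          exact huniq y hys hyt (by linarith)


theorem stcut_dominating_set (n : ℕ) (s t : Fin n) (hst : s ≠ t) :
    ∃ A : (Fin n → Bool) × (Sym2 (Fin n) → ℝ) → (Sym2 (Fin n) → ℝ),
      ∀ w w' : Sym2 (Fin n) → ℝ, (∀ e, 0 ≤ w e) → (∀ e, 0 ≤ w' e) →
        NeighboringW n w w' →
        ∀ y₀ : Fin n → Bool, y₀ s = true → y₀ t = false →
        (∀ y : Fin n → Bool, y s = true → y t = false →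
          stCost n w y₀ ≤ stCost n w y) →
        (∀ y : Fin n → Bool, y s = true → y t = false →
          stCost n w y = stCost n w y₀ → y = y₀) →
        (∀ e, e ∉ terminalEdges n s t → A (y₀, w' - w) e = 0) ∧
        (∑ e : Sym2 (Fin n), |A (y₀, w' - w) e| ≤ 2) ∧
        (∀ y : Fin n → Bool, y s = true → y t = false →
          stCost n (fun e => w' e + A (y₀, w' - w) e) y₀
            ≤ stCost n (fun e => w' e + A (y₀, w' - w) e) y) ∧
        (∀ y : Fin n → Bool, y s = true → y t = false →
          stCost n (fun e => w' e + A (y₀, w' - w) e) y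
            = stCost n (fun e => w' e + A (y₀, w' - w) e) y₀ → y = y₀) := by
  classical
  refine ⟨Afun n s t, ?_⟩
  intro w w' hw hw' hN y₀ h0s h0t hmin huniq
  by_cases hd0 : ∀ e, w' e = w e
  · have hA : Afun n s t (y₀, w' - w) = fun _ => 0 := by
      unfold Afun
      have hne : ¬ ∃ e, (w' - w) e ≠ 0 ∧ ∀ e', e' ≠ e → (w' - w) e' = 0 := by
        rintro ⟨e, he, -⟩
        exact he (by simp [Pi.sub_apply, hd0 e])
      rw [dif_neg hne]
      rfl
    rw [hA]
    have hg : (fun e => w' e + (fun _ => (0:ℝ)) e) = w := by funext e; simp [hd0 e]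
    rw [hg]
    refine ⟨fun e _ => rfl, by simp, hmin, huniq⟩
  · obtain ⟨e₀, hd1, hd2⟩ := hN
    simp only [not_forall] at hd0
    obtain ⟨e1, he1⟩ := hd0
    have he0 : w' e₀ ≠ w e₀ := by
      by_contra h
      rcases eq_or_ne e1 e₀ with rfl | hne
      · exact he1 h
      · exact he1 (hd1 e1 hne)
    have hex : ∃ e, (w' - w) e ≠ 0 ∧ ∀ e', e' ≠ e → (w' - w) e' = 0 :=
      ⟨e₀, by simpa [sub_ne_zero] using he0, fun e' h => by simp [Pi.sub_apply, hd1 e' h]⟩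
    have hch : hex.choose = e₀ := by
      by_contra h
      have := hex.choose_spec.1
      exact this (by simp [Pi.sub_apply, hd1 _ h])
    have hAeq : Afun n s t (y₀, w' - w) = Bfun n s t y₀ e₀ (w' e₀ - w e₀) := by
      unfold Afun
      rw [dif_pos hex, hch]
      simp [Pi.sub_apply]
    rw [hAeq]
    have hδ : |w' e₀ - w e₀| ≤ 1 := hd2
    clear hd2 he1 he0 hex hch
    revert hd1 hδ
    induction e₀ using Sym2.ind with
    | _ u v =>
      intro hd1 hδ
      exact crux n s t hst w w' u v hd1 hδ y₀ h0s h0t hmin huniq
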